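/- arXiv:2306.09471 — 2 statements merged into one kernel-verified Lean document; each statement's English description precedes it below -/
import Mathlib

section
/- Let S : D → ℝ^m be a statistic and let Δ be an upper bound on ‖S(d) − S(d')‖₁ over all pairs of adjacent datasets d, d' (differing in one element), with Δ ∈ (0,∞). Then the randomized algorithm A(d) = S(d) + (ζ₁,…,ζ_m), where each ζᵢ is drawn independently from the Laplace distribution with scale Δ/ε, satisfies ε-differential privacy: for all adjacent d, d' and all measurable events O ⊆ ℝ^m, P(A(d) ∈ O) ≤ exp(ε)·P(A(d') ∈ O). -/
open MeasureTheory Real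
open scoped ENNReal

/-- Laplace distribution with scale `lam`. -/
noncomputable def laplaceMeasure (lam : ℝ) : Measure ℝ :=
  volume.withDensity (fun x => ENNReal.ofReal ((1 / (2 * lam)) * Real.exp (-|x| / lam)))

/-- `ε`-differential privacy for a randomized algorithm `A` (given as a kernel of
measures) with respect to an adjacency relation `adj` on datasets. -/
def DiffPrivate {D Ω : Type*} [MeasurableSpace Ω] (adj : D → D → Prop)
    (A : D → Measure Ω) (ε : ℝ) : Prop :=
  ∀ d d', adj d d' → ∀ O : Set Ω, MeasurableSet O →
    A d O ≤ ENNReal.ofReal (Real.exp ε) * A d' O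

/-- Tonelli for a product of one-variable functions over a finite product of `volume`s. -/
lemma lintegral_pi_prod_aux {n : ℕ} (g : Fin n → ℝ → ℝ≥0∞) (hg : ∀ i, Measurable (g i)) :
    ∫⁻ x : Fin n → ℝ, ∏ i, g i (x i) = ∏ i, ∫⁻ x, g i x := by
  induction n with
  | zero =>
      simp [volume_pi, Measure.pi_of_empty]
  | succ n ih =>
      have e := (MeasureTheory.measurePreserving_piFinSuccAbove
        (fun _ : Fin (n + 1) => (volume : Measure ℝ)) 0)
      calc ∫⁻ x : Fin (n + 1) → ℝ, ∏ i, g i (x i)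
          = ∫⁻ p : ℝ × (Fin n → ℝ), g 0 p.1 * ∏ i : Fin n, g i.succ (p.2 i) := by
            rw [volume_pi, ← MeasurePreserving.lintegral_comp_emb
              (MeasurePreserving.symm _ e)
              (MeasurableEquiv.piFinSuccAbove (fun _ : Fin (n+1) => ℝ) 0).symm.measurableEmbedding]
            have hv : (volume : Measure (ℝ × (Fin n → ℝ)))
                = (volume : Measure ℝ).prod (Measure.pi fun _ => volume) := by
              rw [Measure.volume_eq_prod, volume_pi]
            rw [hv]
            refine lintegral_congr fun p => ?_
            simp only [MeasurableEquiv.piFinSuccAbove_symm_apply, Fin.insertNthEquiv,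
              Fin.prod_univ_succ, Fin.insertNth_zero, Equiv.coe_fn_mk, Fin.cons_succ,
              Fin.zero_succAbove, Fin.cons_zero, Fin.succAbove_zero, cast_eq]
            try congr 1
        _ = (∫⁻ x, g 0 x) * ∏ i : Fin n, ∫⁻ x, g i.succ x := by
            have hv : (volume : Measure (ℝ × (Fin n → ℝ)))
                = (volume : Measure ℝ).prod (Measure.pi fun _ => volume) := by
              rw [Measure.volume_eq_prod, volume_pi]
            rw [hv, lintegral_prod_mul (f := g 0)
                (g := fun y : Fin n → ℝ => ∏ i : Fin n, g i.succ (y i)) (hg 0).aemeasurable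
                (Finset.measurable_prod _ fun i _ => (hg i.succ).comp (measurable_pi_apply i)).aemeasurable,
              ← ih (fun i => g i.succ) (fun i => hg i.succ), volume_pi]
        _ = ∏ i, ∫⁻ x, g i x := by rw [Fin.prod_univ_succ]

/-- A finite product of `withDensity` measures on `ℝ` is `withDensity` of the product. -/
lemma pi_withDensity_aux {n : ℕ} (f : ℝ → ℝ≥0∞) (hf : Measurable f) (hfin : ∀ x, f x ≠ ⊤) :
    Measure.pi (fun _ : Fin n => volume.withDensity f)
      = (volume : Measure (Fin n → ℝ)).withDensity (fun x => ∏ i, f (x i)) := by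
  haveI : SigmaFinite (volume.withDensity f) :=
    SigmaFinite.withDensity_of_ne_top (Filter.Eventually.of_forall hfin)
  refine Measure.pi_eq fun s hs => ?_
  rw [withDensity_apply _ (MeasurableSet.univ_pi hs), ← lintegral_indicator (MeasurableSet.univ_pi hs) _]
  have hind : ∀ x : Fin n → ℝ,
      (Set.univ.pi s).indicator (fun x => ∏ i, f (x i)) x = ∏ i, (s i).indicator f (x i) := by
    intro x
    by_cases hx : x ∈ Set.univ.pi s
    · rw [Set.indicator_of_mem hx]
      exact Finset.prod_congr rfl fun i _ =>
        (Set.indicator_of_mem (hx i (Set.mem_univ i)) f).symm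
    · rw [Set.indicator_of_notMem hx]
      simp only [Set.mem_univ_pi, not_forall] at hx
      obtain ⟨i, hi⟩ := hx
      exact (Finset.prod_eq_zero (Finset.mem_univ i)
        (by rw [Set.indicator_of_notMem hi])).symm
  simp_rw [hind]
  rw [lintegral_pi_prod_aux _ (fun i => hf.indicator (hs i))]
  exact Finset.prod_congr rfl fun i _ => by
    rw [lintegral_indicator (hs i) _, withDensity_apply _ (hs i)]

/-- Laplace mechanism: if `Δ ∈ (0,∞)` bounds the ℓ¹-sensitivity of the statistic
`S : D → ℝ^m` over adjacent datasets, then adding independent Laplace(Δ/ε) noise to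
each coordinate of `S` is `ε`-differentially private. -/
theorem laplace_mechanism {D : Type*} (m : ℕ) (adj : D → D → Prop)
    (S : D → (Fin m → ℝ)) (Δ ε : ℝ) (hΔ : 0 < Δ) (hε : 0 < ε)
    (hsens : ∀ d d', adj d d' → ∑ i, |S d i - S d' i| ≤ Δ) :
    DiffPrivate adj
      (fun d => (Measure.pi (fun _ : Fin m => laplaceMeasure (Δ / ε))).map
        (fun ζ => S d + ζ)) ε := by
  intro d d' hadj O hO
  set lam : ℝ := Δ / ε with hlam_def
  have hlam : 0 < lam := div_pos hΔ hε
  set f : ℝ → ℝ≥0∞ := fun x => ENNReal.ofReal ((1 / (2 * lam)) * Real.exp (-|x| / lam)) with hf_def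
  have hf : Measurable f := by
    apply ENNReal.measurable_ofReal.comp
    exact (measurable_const.mul ((measurable_norm.neg.div_const lam).exp))
  have hpi : Measure.pi (fun _ : Fin m => laplaceMeasure lam)
      = (volume : Measure (Fin m → ℝ)).withDensity (fun x => ∏ i, f (x i)) :=
    pi_withDensity_aux f hf (fun x => ENNReal.ofReal_ne_top)
  -- rewrite each side as a lintegral
  have key : ∀ c : Fin m → ℝ,
      ((Measure.pi (fun _ : Fin m => laplaceMeasure lam)).map (fun ζ => c + ζ)) O
        = ∫⁻ y, O.indicator (fun _ => (1 : ℝ≥0∞)) y * ∏ i, f (y i - c i) := by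
    intro c
    rw [Measure.map_apply (measurable_const_add c) hO, hpi,
      withDensity_apply _ ((measurable_const_add c) hO),
      ← lintegral_indicator ((measurable_const_add c) hO) _]
    have : ∀ x : Fin m → ℝ,
        ((fun ζ => c + ζ) ⁻¹' O).indicator (fun x => ∏ i, f (x i)) x
          = (fun y => O.indicator (fun _ => (1 : ℝ≥0∞)) y * ∏ i, f (y i - c i)) (c + x) := by
      intro x
      show _ = O.indicator (fun _ => (1 : ℝ≥0∞)) (c + x) * ∏ i, f ((c + x) i - c i)
      by_cases hx : c + x ∈ O
      · have hx' : x ∈ (fun ζ => c + ζ) ⁻¹' O := hx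
        rw [Set.indicator_of_mem hx', Set.indicator_of_mem hx, one_mul]
        exact Finset.prod_congr rfl fun i _ => by simp
      · have hx' : x ∉ (fun ζ => c + ζ) ⁻¹' O := hx
        rw [Set.indicator_of_notMem hx', Set.indicator_of_notMem hx, zero_mul]
    simp_rw [this]
    exact lintegral_add_left_eq_self (μ := (volume : Measure (Fin m → ℝ)))
      (fun y => O.indicator (fun _ => (1 : ℝ≥0∞)) y * ∏ i, f (y i - c i)) c
  simp only
  rw [key (S d), key (S d')]
  rw [← lintegral_const_mul' _ _ ENNReal.ofReal_ne_top]
  refine lintegral_mono fun y => ?_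
  rcases eq_or_ne (O.indicator (fun _ => (1 : ℝ≥0∞)) y) 0 with h0 | h0
  · simp [h0]
  have h1 : O.indicator (fun _ => (1 : ℝ≥0∞)) y = 1 := by
    by_cases hy : y ∈ O
    · simp [hy]
    · simp [hy] at h0
  rw [h1]
  simp only [one_mul]
  -- pointwise density ratio bound
  have hfactor : ∀ i, f (y i - S d i)
      ≤ ENNReal.ofReal (Real.exp (|S d i - S d' i| / lam)) * f (y i - S d' i) := by
    intro i
    rw [hf_def]
    dsimp only
    rw [← ENNReal.ofReal_mul (Real.exp_pos _).le]
    apply ENNReal.ofReal_le_ofReal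
    rw [← mul_assoc, mul_comm (Real.exp _), mul_assoc, ← Real.exp_add]
    apply mul_le_mul_of_nonneg_left _ (by positivity)
    apply Real.exp_le_exp.2
    rw [← add_div, div_le_div_iff_of_pos_right hlam]
    have := abs_sub_abs_le_abs_sub (y i - S d' i) (y i - S d i)
    have h2 : |(y i - S d' i) - (y i - S d i)| = |S d i - S d' i| := by
      rw [show (y i - S d' i) - (y i - S d i) = S d i - S d' i by ring]
    linarith
  calc ∏ i, f (y i - S d i)
      ≤ ∏ i, (ENNReal.ofReal (Real.exp (|S d i - S d' i| / lam)) * f (y i - S d' i)) :=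
        Finset.prod_le_prod' fun i _ => hfactor i
    _ = (∏ i, ENNReal.ofReal (Real.exp (|S d i - S d' i| / lam))) * ∏ i, f (y i - S d' i) :=
        Finset.prod_mul_distrib
    _ ≤ ENNReal.ofReal (Real.exp ε) * ∏ i, f (y i - S d' i) := by
        apply mul_le_mul_left
        rw [← ENNReal.ofReal_prod_of_nonneg (fun i _ => (Real.exp_pos _).le),
          ← Real.exp_sum]
        apply ENNReal.ofReal_le_ofReal
        apply Real.exp_le_exp.2
        rw [← Finset.sum_div]
        rw [div_le_iff₀ hlam] at *
        calc ∑ i, |S d i - S d' i| ≤ Δ := hsens d d' hadj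
          _ = ε * lam := by rw [hlam_def]; field_simp
end

section
/- Let η₁, η₂ be independent Laplace random variables each with scale T/ε (ε > 0, T ≥ 1). For any α ≥ 0, P(η₂ − η₁ ≥ α) = exp(−εα/T)·(εα/T + 2)/4. -/
open MeasureTheory ProbabilityTheory Real

open Set

lemma myIntOnIoi {b : ℝ} (hb : 0 < b) (c : ℝ) :
    IntegrableOn (fun x => Real.exp (-(b * x))) (Ioi c) := by
  simpa [neg_mul] using exp_neg_integrableOn_Ioi c hb

lemma myIntIoi {b : ℝ} (hb : 0 < b) (c : ℝ) :
    ∫ x in Ioi c, Real.exp (-(b * x)) = Real.exp (-(b * c)) / b := by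
  have := integral_comp_mul_right_Ioi (fun y => Real.exp (-y)) c hb
  simp only [smul_eq_mul] at this
  calc ∫ x in Ioi c, Real.exp (-(b * x)) = ∫ x in Ioi c, Real.exp (-(x * b)) := by
        simp [mul_comm]
    _ = b⁻¹ * ∫ x in Ioi (c * b), Real.exp (-x) := this
    _ = Real.exp (-(b * c)) / b := by
        rw [integral_exp_neg_Ioi]; rw [mul_comm c b]; ring

lemma myIntOnIic {b : ℝ} (hb : 0 < b) (c : ℝ) :
    IntegrableOn (fun x => Real.exp (b * x)) (Iic c) := by
  have h1 : Integrable ((Ioi (-c)).indicator (fun x => Real.exp (-(b * x)))) :=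
    (integrable_indicator_iff measurableSet_Ioi).2 (myIntOnIoi hb (-c))
  have h3 := h1.comp_neg
  have heq : (fun x => ((Ioi (-c)).indicator (fun x => Real.exp (-(b * x)))) (-x))
      = (Iio c).indicator (fun x => Real.exp (b * x)) := by
    ext x
    by_cases hx : x < c
    · rw [Set.indicator_of_mem (show x ∈ Iio c from hx),
        Set.indicator_of_mem (by simpa using hx : -x ∈ Ioi (-c))]
      ring_nf
    · rw [Set.indicator_of_notMem (by simpa using hx : x ∉ Iio c),
        Set.indicator_of_notMem (by simpa using hx : -x ∉ Ioi (-c))]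
  rw [heq] at h3
  have := (integrable_indicator_iff measurableSet_Iio).1 h3
  exact this.congr_set_ae Iio_ae_eq_Iic.symm

lemma myIntIic {b : ℝ} (hb : 0 < b) (c : ℝ) :
    ∫ x in Iic c, Real.exp (b * x) = Real.exp (b * c) / b := by
  have := integral_comp_neg_Iic c (fun x => Real.exp (-(b * x)))
  calc ∫ x in Iic c, Real.exp (b * x) = ∫ x in Iic c, Real.exp (-(b * -x)) := by
        simp
    _ = ∫ x in Ioi (-c), Real.exp (-(b * x)) := this
    _ = Real.exp (b * c) / b := by rw [myIntIoi hb]; ring_nf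

noncomputable def lapDen (lam x : ℝ) : ℝ := (1 / (2 * lam)) * Real.exp (-|x| / lam)

lemma lapDen_nonneg {lam : ℝ} (hl : 0 < lam) (x : ℝ) : 0 ≤ lapDen lam x := by
  unfold lapDen; positivity

lemma lapDen_integrable {lam : ℝ} (hl : 0 < lam) : Integrable (fun x => lapDen lam x) := by
  have hinv : 0 < lam⁻¹ := inv_pos.2 hl
  have h1 : IntegrableOn (fun x => lapDen lam x) (Iic 0) := by
    apply IntegrableOn.congr_fun ((myIntOnIic hinv 0).const_mul (1 / (2 * lam)))
      ?_ measurableSet_Iic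
    intro x hx
    unfold lapDen
    dsimp only
    rw [abs_of_nonpos (mem_Iic.1 hx)]
    ring_nf
  have h2 : IntegrableOn (fun x => lapDen lam x) (Ioi 0) := by
    apply IntegrableOn.congr_fun ((myIntOnIoi hinv 0).const_mul (1 / (2 * lam)))
      ?_ measurableSet_Ioi
    intro x hx
    unfold lapDen
    dsimp only
    rw [abs_of_pos (mem_Ioi.1 hx)]
    ring_nf
  rw [← integrableOn_univ, ← Iic_union_Ioi (a := (0:ℝ))]
  exact h1.union h2

lemma lapInt_Ici {lam : ℝ} (hl : 0 < lam) {t : ℝ} (ht : 0 ≤ t) :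
    ∫ y in Ici t, lapDen lam y = Real.exp (-t / lam) / 2 := by
  have hinv : 0 < lam⁻¹ := inv_pos.2 hl
  have : ∫ y in Ici t, lapDen lam y = ∫ y in Ici t, (1 / (2 * lam)) * Real.exp (-(lam⁻¹ * y)) := by
    apply setIntegral_congr_fun measurableSet_Ici
    intro y hy
    unfold lapDen
    rw [abs_of_nonneg (le_trans ht (mem_Ici.1 hy))]
    ring_nf
  rw [this, integral_Ici_eq_integral_Ioi, integral_const_mul, myIntIoi hinv]
  field_simp

noncomputable def lapF (lam t : ℝ) : ℝ :=
  if 0 ≤ t then Real.exp (-t / lam) / 2 else 1 - Real.exp (t / lam) / 2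

lemma lapF_nonneg {lam : ℝ} (hl : 0 < lam) (t : ℝ) : 0 ≤ lapF lam t := by
  unfold lapF
  split_ifs with h
  · positivity
  · have : Real.exp (t / lam) ≤ 1 := by
      rw [Real.exp_le_one_iff]
      exact div_nonpos_of_nonpos_of_nonneg (le_of_not_ge h) hl.le
    linarith

lemma lapF_le_one {lam : ℝ} (hl : 0 < lam) (t : ℝ) : lapF lam t ≤ 1 := by
  unfold lapF
  split_ifs with h
  · have : Real.exp (-t / lam) ≤ 1 := by
      rw [Real.exp_le_one_iff]
      exact div_nonpos_of_nonpos_of_nonneg (neg_nonpos.2 h) hl.le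
    linarith
  · have : 0 < Real.exp (t / lam) := Real.exp_pos _
    linarith

lemma lapF_measurable (lam : ℝ) : Measurable (lapF lam) := by
  unfold lapF
  apply Measurable.ite (measurableSet_le measurable_const measurable_id)
  · exact ((measurable_id.neg.div_const lam).exp.div_const 2)
  · exact (measurable_const.sub ((measurable_id.div_const lam).exp.div_const 2))

lemma lapInt_Ici_neg {lam : ℝ} (hl : 0 < lam) {t : ℝ} (ht : t < 0) :
    ∫ y in Ici t, lapDen lam y = 1 - Real.exp (t / lam) / 2 := by
  have hinv : 0 < lam⁻¹ := inv_pos.2 hl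
  have hIcoOn : IntegrableOn (fun y => lapDen lam y) (Ico t 0) :=
    (lapDen_integrable hl).integrableOn
  have hIciOn : IntegrableOn (fun y => lapDen lam y) (Ici 0) :=
    (lapDen_integrable hl).integrableOn
  have hdisj : Disjoint (Ico t (0:ℝ)) (Ici (0:ℝ)) :=
    (Iio_disjoint_Ici le_rfl).mono_left Ico_subset_Iio_self
  have hunion : Ico t 0 ∪ Ici (0:ℝ) = Ici t := Ico_union_Ici_eq_Ici ht.le
  rw [← hunion, setIntegral_union hdisj measurableSet_Ici hIcoOn hIciOn]
  have h2 : ∫ y in Ici (0:ℝ), lapDen lam y = 1 / 2 := by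
    rw [lapInt_Ici hl le_rfl]; simp
  have h1 : ∫ y in Ico t 0, lapDen lam y = (1 - Real.exp (t / lam)) / 2 := by
    have hIoc : ∫ y in Ico t 0, lapDen lam y = ∫ y in Ioc t 0, lapDen lam y := by
      rw [setIntegral_congr_set Ico_ae_eq_Icc, setIntegral_congr_set Ioc_ae_eq_Icc.symm]
    have hcong : ∫ y in Ioc t 0, lapDen lam y
        = ∫ y in Ioc t 0, (1 / (2 * lam)) * Real.exp (lam⁻¹ * y) := by
      apply setIntegral_congr_fun measurableSet_Ioc
      intro y hy
      unfold lapDen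
      dsimp only
      rw [abs_of_nonpos hy.2]
      ring_nf
    have hII : ∫ y in Ioc t 0, (1 / (2 * lam)) * Real.exp (lam⁻¹ * y)
        = (∫ y in Iic (0:ℝ), (1 / (2 * lam)) * Real.exp (lam⁻¹ * y))
          - ∫ y in Iic t, (1 / (2 * lam)) * Real.exp (lam⁻¹ * y) := by
      rw [← intervalIntegral.integral_of_le ht.le,
        ← intervalIntegral.integral_Iic_sub_Iic ((myIntOnIic hinv t).const_mul _) ((myIntOnIic hinv 0).const_mul _)]
    rw [hIoc, hcong, hII, integral_const_mul, integral_const_mul, myIntIic hinv, myIntIic hinv]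
    field_simp
    ring_nf
    rw [Real.exp_zero]
  rw [h1, h2]
  ring

lemma laplace_tail {lam : ℝ} (hl : 0 < lam) (t : ℝ) :
    laplaceMeasure lam (Ici t) = ENNReal.ofReal (lapF lam t) := by
  have hmeas : Measurable (fun x => ENNReal.ofReal ((1 / (2 * lam)) * Real.exp (-|x| / lam))) := by
    apply Measurable.ennreal_ofReal
    exact (measurable_const.mul (((measurable_abs.neg).div_const lam).exp))
  rw [laplaceMeasure, withDensity_apply _ measurableSet_Ici]
  have : ∫⁻ y in Ici t, ENNReal.ofReal ((1 / (2 * lam)) * Real.exp (-|y| / lam))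
      = ENNReal.ofReal (∫ y in Ici t, lapDen lam y) := by
    unfold lapDen
    have h1 : IntegrableOn (fun y : ℝ => (1 / (2 * lam)) * Real.exp (-|y| / lam)) (Ici t) :=
      (lapDen_integrable hl).integrableOn
    have h2 : 0 ≤ᵐ[volume.restrict (Ici t)] fun y : ℝ => (1 / (2 * lam)) * Real.exp (-|y| / lam) :=
      Filter.Eventually.of_forall (fun y => lapDen_nonneg hl y)
    exact (ofReal_integral_eq_lintegral_ofReal h1 h2).symm
  rw [this]
  congr 1
  unfold lapF
  split_ifs with h
  · exact lapInt_Ici hl h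
  · exact lapInt_Ici_neg hl (lt_of_not_ge h)

lemma lapF_comp_meas (lam α : ℝ) : Measurable (fun x => lapF lam (α + x)) :=
  (lapF_measurable lam).comp (measurable_const.add measurable_id)

lemma lap_h_integrable {lam : ℝ} (hl : 0 < lam) (α : ℝ) :
    Integrable (fun x => lapDen lam x * lapF lam (α + x)) := by
  have h := Integrable.bdd_mul (lapDen_integrable hl)
    (lapF_comp_meas lam α).aestronglyMeasurable (c := 1)
    (Filter.Eventually.of_forall fun x => by
      rw [Real.norm_eq_abs, abs_of_nonneg (lapF_nonneg hl _)]
      exact lapF_le_one hl _)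
  simpa [mul_comm] using h

lemma lap_main_integral {lam : ℝ} (hl : 0 < lam) {α : ℝ} (hα : 0 ≤ α) :
    ∫ x, lapDen lam x * lapF lam (α + x)
      = Real.exp (-(α / lam)) * (α / lam + 2) / 4 := by
  have hinv : 0 < lam⁻¹ := inv_pos.2 hl
  have h2inv : 0 < 2 * lam⁻¹ := by positivity
  -- piece A : Iic (-α)
  have hA : ∫ x in Iic (-α), lapDen lam x * lapF lam (α + x)
      = (1 / (2 * lam)) * (Real.exp (lam⁻¹ * -α) / lam⁻¹)
        - ((1 / (2 * lam)) / 2 * Real.exp (α / lam)) * (Real.exp ((2 * lam⁻¹) * -α) / (2 * lam⁻¹)) := by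
    have hcong : ∀ x ∈ Iic (-α), lapDen lam x * lapF lam (α + x)
        = (1 / (2 * lam)) * Real.exp (lam⁻¹ * x)
          - ((1 / (2 * lam)) / 2 * Real.exp (α / lam)) * Real.exp ((2 * lam⁻¹) * x) := by
      intro x hx
      have hx' : x ≤ -α := mem_Iic.1 hx
      have hx0 : x ≤ 0 := le_trans hx' (by linarith)
      unfold lapDen lapF
      rw [abs_of_nonpos hx0]
      split_ifs with h
      · have hxe : x = -α := le_antisymm hx' (by linarith)
        subst hxe
        have k1 : Real.exp (α / lam) * Real.exp ((2 * lam⁻¹) * -α) = Real.exp (lam⁻¹ * -α) := by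
          rw [← Real.exp_add]; congr 1; ring
        have k2 : Real.exp (-(α + -α) / lam) = 1 := by norm_num
        have k3 : Real.exp (- - -α / lam) = Real.exp (lam⁻¹ * -α) := by
          congr 1; ring
        linear_combination ((1 / (2 * lam)) / 2) * k1
          + ((1 / (2 * lam)) * Real.exp (-(α + -α) / lam) / 2) * k3
          + ((1 / (2 * lam)) * Real.exp (lam⁻¹ * -α) / 2) * k2
      · have k1 : Real.exp (- -x / lam) * Real.exp ((α + x) / lam)
            = Real.exp (α / lam) * Real.exp ((2 * lam⁻¹) * x) := by
          rw [← Real.exp_add, ← Real.exp_add]; congr 1; ring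
        have k3 : Real.exp (- -x / lam) = Real.exp (lam⁻¹ * x) := by
          congr 1; ring
        linear_combination (1 / (2 * lam)) * k3 - ((1 / (2 * lam)) / 2) * k1
    rw [setIntegral_congr_fun measurableSet_Iic hcong,
      integral_sub ((myIntOnIic hinv _).const_mul _) ((myIntOnIic h2inv _).const_mul _),
      integral_const_mul, integral_const_mul, myIntIic hinv, myIntIic h2inv]
  -- piece B : Ioc (-α) 0
  have hB : ∫ x in Ioc (-α) 0, lapDen lam x * lapF lam (α + x)
      = α * ((1 / (2 * lam)) / 2 * Real.exp (-(α / lam))) := by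
    have hcong : ∀ x ∈ Ioc (-α) (0:ℝ), lapDen lam x * lapF lam (α + x)
        = (1 / (2 * lam)) / 2 * Real.exp (-(α / lam)) := by
      intro x hx
      have hx1 : -α < x := hx.1
      have hx2 : x ≤ 0 := hx.2
      unfold lapDen lapF
      rw [abs_of_nonpos hx2, if_pos (by linarith : (0:ℝ) ≤ α + x)]
      have k1 : Real.exp (- -x / lam) * Real.exp (-(α + x) / lam) = Real.exp (-(α / lam)) := by
        rw [← Real.exp_add]; congr 1; ring
      linear_combination ((1 / (2 * lam)) / 2) * k1
    rw [setIntegral_congr_fun measurableSet_Ioc hcong, setIntegral_const, smul_eq_mul,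
      Real.volume_real_Ioc, max_eq_left (by linarith)]
    ring_nf
  -- piece C : Ioi 0
  have hC : ∫ x in Ioi 0, lapDen lam x * lapF lam (α + x)
      = ((1 / (2 * lam)) / 2 * Real.exp (-(α / lam))) * (Real.exp (-((2 * lam⁻¹) * 0)) / (2 * lam⁻¹)) := by
    have hcong : ∀ x ∈ Ioi (0:ℝ), lapDen lam x * lapF lam (α + x)
        = ((1 / (2 * lam)) / 2 * Real.exp (-(α / lam))) * Real.exp (-((2 * lam⁻¹) * x)) := by
      intro x hx
      have hx1 : (0:ℝ) < x := hx
      unfold lapDen lapF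
      rw [abs_of_pos hx1, if_pos (by linarith : (0:ℝ) ≤ α + x)]
      have k1 : Real.exp (-x / lam) * Real.exp (-(α + x) / lam)
          = Real.exp (-(α / lam)) * Real.exp (-((2 * lam⁻¹) * x)) := by
        rw [← Real.exp_add, ← Real.exp_add]; congr 1; ring
      linear_combination ((1 / (2 * lam)) / 2) * k1
    rw [setIntegral_congr_fun measurableSet_Ioi hcong, integral_const_mul, myIntIoi h2inv]
  -- assemble
  have hsplit2 : ∫ x in Ioi (-α), lapDen lam x * lapF lam (α + x)
      = (∫ x in Ioc (-α) 0, lapDen lam x * lapF lam (α + x))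
        + ∫ x in Ioi 0, lapDen lam x * lapF lam (α + x) := by
    rw [← setIntegral_union Ioc_disjoint_Ioi_same measurableSet_Ioi
      ((lap_h_integrable hl α).integrableOn) ((lap_h_integrable hl α).integrableOn),
      Ioc_union_Ioi_eq_Ioi (by linarith : -α ≤ (0:ℝ))]
  have hsplit1 := intervalIntegral.integral_Iic_add_Ioi (b := -α) (μ := volume)
    ((lap_h_integrable hl α).integrableOn) ((lap_h_integrable hl α).integrableOn)
  rw [← hsplit1, hsplit2, hA, hB, hC]
  have k1 : Real.exp (α / lam) * Real.exp ((2 * lam⁻¹) * -α) = Real.exp (lam⁻¹ * -α) := by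
    rw [← Real.exp_add]; congr 1; ring
  have k2 : Real.exp (lam⁻¹ * -α) = Real.exp (-(α / lam)) := by
    congr 1; ring
  have k4 : Real.exp (-((2 * lam⁻¹) * 0)) = 1 := by norm_num
  have hlne : lam ≠ 0 := hl.ne'
  field_simp
  have key : Real.exp (α / lam) * Real.exp (-(2 * α / lam)) = Real.exp (-(α / lam)) := by
    rw [← Real.exp_add]; congr 1; ring
  have k0 : Real.exp (-(2 * 0 / lam)) = 1 := by simp
  linear_combination (4 * lam * Real.exp (-(α / lam))) * k0 - 4 * lam * key
/-- If `η₁`, `η₂` are independent Laplace(T/ε) random variables, then for any `α ≥ 0`,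
`P(η₂ − η₁ ≥ α) = exp(−εα/T)·(εα/T + 2)/4`. -/
theorem laplace_diff_tail {Ω : Type*} [MeasureSpace Ω]
    [IsProbabilityMeasure (ℙ : Measure Ω)]
    (T : ℤ) (ε : ℝ) (hT : 1 ≤ T) (hε : 0 < ε)
    (η₁ η₂ : Ω → ℝ) (hη₁ : Measurable η₁) (hη₂ : Measurable η₂)
    (hlaw₁ : Measure.map η₁ ℙ = laplaceMeasure ((T : ℝ) / ε))
    (hlaw₂ : Measure.map η₂ ℙ = laplaceMeasure ((T : ℝ) / ε))
    (hindep : IndepFun η₁ η₂) (α : ℝ) (hα : 0 ≤ α) :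
    ℙ {ω | α ≤ η₂ ω - η₁ ω} =
      ENNReal.ofReal (Real.exp (-(ε * α / T)) * (ε * α / T + 2) / 4) := by
  have hT0 : (0:ℝ) < T := by
    have : (1:ℝ) ≤ (T:ℝ) := by exact_mod_cast hT
    linarith
  set lam := (T:ℝ) / ε with hlam
  have hl : 0 < lam := div_pos hT0 hε
  have hS : MeasurableSet {p : ℝ × ℝ | α ≤ p.2 - p.1} :=
    measurableSet_le measurable_const (measurable_snd.sub measurable_fst)
  have hmap : Measure.map (fun ω => (η₁ ω, η₂ ω)) ℙ
      = (laplaceMeasure lam).prod (laplaceMeasure lam) := by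
    rw [(ProbabilityTheory.indepFun_iff_map_prod_eq_prod_map_map
      hη₁.aemeasurable hη₂.aemeasurable).1 hindep, hlaw₁, hlaw₂]
  have hpre : {ω | α ≤ η₂ ω - η₁ ω}
      = (fun ω => (η₁ ω, η₂ ω)) ⁻¹' {p : ℝ × ℝ | α ≤ p.2 - p.1} := rfl
  haveI : IsFiniteMeasure (laplaceMeasure lam) := by
    constructor
    rw [laplaceMeasure, withDensity_apply _ MeasurableSet.univ, Measure.restrict_univ]
    exact (lapDen_integrable hl).lintegral_lt_top
  rw [hpre, ← Measure.map_apply (hη₁.prodMk hη₂) hS, hmap, Measure.prod_apply hS]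
  have hslice : ∀ x : ℝ, (Prod.mk x ⁻¹' {p : ℝ × ℝ | α ≤ p.2 - p.1}) = Ici (α + x) := by
    intro x
    ext y
    simp only [mem_preimage, mem_setOf_eq, mem_Ici]
    constructor <;> intro h <;> linarith
  have h1 : ∫⁻ x, (laplaceMeasure lam) (Prod.mk x ⁻¹' {p : ℝ × ℝ | α ≤ p.2 - p.1})
        ∂(laplaceMeasure lam)
      = ∫⁻ x, ENNReal.ofReal (lapF lam (α + x)) ∂(laplaceMeasure lam) := by
    apply lintegral_congr
    intro x
    rw [hslice x, laplace_tail hl]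
  rw [h1]
  have hden : Measurable (fun x : ℝ =>
      ENNReal.ofReal ((1 / (2 * lam)) * Real.exp (-|x| / lam))) :=
    (measurable_const.mul (((measurable_abs.neg).div_const lam).exp)).ennreal_ofReal
  have hF : Measurable (fun x : ℝ => ENNReal.ofReal (lapF lam (α + x))) :=
    (lapF_comp_meas lam α).ennreal_ofReal
  rw [laplaceMeasure, lintegral_withDensity_eq_lintegral_mul _ hden hF]
  have h2 : ∫⁻ x, ((fun x : ℝ => ENNReal.ofReal ((1 / (2 * lam)) * Real.exp (-|x| / lam)))
        * fun x => ENNReal.ofReal (lapF lam (α + x))) x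
      = ∫⁻ x, ENNReal.ofReal (lapDen lam x * lapF lam (α + x)) := by
    apply lintegral_congr
    intro x
    simp only [Pi.mul_apply]
    exact (ENNReal.ofReal_mul (lapDen_nonneg hl x)).symm
  rw [h2, ← ofReal_integral_eq_lintegral_ofReal (lap_h_integrable hl α)
    (Filter.Eventually.of_forall fun x =>
      mul_nonneg (lapDen_nonneg hl x) (lapF_nonneg hl _)),
    lap_main_integral hl hα]
  have harg : α / lam = ε * α / T := by
    rw [hlam]
    field_simp
  rw [harg]
end
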